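/- Let F be the Minkowski gauge of a compact convex body K ⊂ ℝⁿ with 0 in its interior, assume F is C¹ on ℝⁿ∖{0}, and let μ be a compactly supported Borel probability measure on ℝⁿ. Then for every x ∈ ℝⁿ the function F_{μ_x} is differentiable at x, and x is a local minimum of F_μ if and only if μ({x}) ≥ F*(D F_{μ_x}(x)), where D F_{μ_x}(x) is the derivative (as a linear functional) of F_{μ_x} at x. -/

import Mathlib

open MeasureTheory Metric Set Filter Topology

set_option maxHeartbeats 1000000

/-- Characterization of local minima of the median functional: for `F`
the Minkowski gauge of a compact convex body (`C¹` away from `0`) and `μ` a compactly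
supported Borel probability measure on `ℝⁿ`, the functional `F_{μ_x}` (with
`μ_x = μ - μ({x})·δ_x`) is differentiable at `x`, and `x` is a local minimum of `F_μ`
iff `μ({x}) ≥ F*(D F_{μ_x}(x))`, `F*` being the dual gauge. -/
theorem median_localMin_iff
    {n : ℕ} (K : Set (EuclideanSpace ℝ (Fin n)))
    (hK_cpt : IsCompact K) (hK_conv : Convex ℝ K)
    (hK_int : (0 : EuclideanSpace ℝ (Fin n)) ∈ interior K)
    (F : EuclideanSpace ℝ (Fin n) → ℝ) (hF : F = gauge K)
    (hFsmooth : ContDiffOn ℝ 1 F {(0 : EuclideanSpace ℝ (Fin n))}ᶜ)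
    (μ : Measure (EuclideanSpace ℝ (Fin n))) [IsProbabilityMeasure μ]
    (hcpt : ∃ s : Set (EuclideanSpace ℝ (Fin n)), IsCompact s ∧ μ sᶜ = 0) :
    ∀ x : EuclideanSpace ℝ (Fin n),
      DifferentiableAt ℝ
        (fun y => ∫ z, F (z - y) ∂(μ - μ {x} • Measure.dirac x)) x ∧
      (IsLocalMin (fun y => ∫ z, F (z - y) ∂μ) x ↔
        sSup ((fderiv ℝ (fun y => ∫ z, F (z - y) ∂(μ - μ {x} • Measure.dirac x)) x) ''
            {y | F y ≤ 1}) ≤ (μ {x}).toReal) := by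
  obtain ⟨s, hs_cpt, hs_null⟩ := hcpt

  -- basic facts about the gauge F
  have hKnhds : K ∈ 𝓝 (0 : EuclideanSpace ℝ (Fin n)) := mem_interior_iff_mem_nhds.mp hK_int
  have habs : Absorbent ℝ K := absorbent_nhds_zero hKnhds
  obtain ⟨r, hr_pos, hr_sub⟩ : ∃ r > 0, ball (0 : EuclideanSpace ℝ (Fin n)) r ⊆ K := Metric.mem_nhds_iff.mp hKnhds
  have hF0 : F 0 = 0 := by rw [hF]; exact gauge_zero
  have hFnn : ∀ v, 0 ≤ F v := by intro v; rw [hF]; exact gauge_nonneg v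
  have hFadd : ∀ a b, F (a + b) ≤ F a + F b := by
    intro a b; rw [hF]; exact gauge_add_le hK_conv habs a b
  have hFsmul : ∀ (t : ℝ), 0 ≤ t → ∀ v, F (t • v) = t * F v := by
    intro t ht v; rw [hF]; exact gauge_smul_of_nonneg ht v
  have hFle : ∀ v, F v ≤ ‖v‖ / r := by
    intro v; rw [hF]
    calc gauge K v ≤ gauge (ball (0 : EuclideanSpace ℝ (Fin n)) r) v :=
          gauge_mono (absorbent_nhds_zero (ball_mem_nhds 0 hr_pos)) hr_sub v
      _ = ‖v‖ / r := gauge_ball hr_pos.le v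
  have hlipR : ∀ a b, F a - F b ≤ ‖a - b‖ / r := by
    intro a b
    have h1 : F a ≤ F (a - b) + F b := by
      have := hFadd (a - b) b; rwa [sub_add_cancel] at this
    have h2 := hFle (a - b)
    linarith
  have hlip : LipschitzWith (Real.toNNReal r⁻¹) F := by
    apply LipschitzWith.of_dist_le_mul
    intro a b
    rw [Real.dist_eq, Real.coe_toNNReal _ (by positivity), dist_eq_norm, abs_sub_le_iff]
    constructor
    · have := hlipR a b; rw [div_eq_inv_mul] at this; linarith
    · have := hlipR b a; rw [div_eq_inv_mul, norm_sub_rev] at this; linarith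
  have hFcont : Continuous F := hlip.continuous
  have hFconvex : ∀ (a b : ℝ) (u v : EuclideanSpace ℝ (Fin n)), 0 ≤ a → 0 ≤ b →
      F (a • u + b • v) ≤ a * F u + b * F v := by
    intro a b u v ha hb
    calc F (a • u + b • v) ≤ F (a • u) + F (b • v) := hFadd _ _
      _ = a * F u + b * F v := by rw [hFsmul a ha, hFsmul b hb]
  have hbdd : Bornology.IsVonNBounded ℝ K :=
    NormedSpace.isVonNBounded_of_isBounded _ hK_cpt.isBounded
  have hFzero : ∀ v : EuclideanSpace ℝ (Fin n), F v = 0 ↔ v = 0 := by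
    intro v; rw [hF]; exact gauge_eq_zero habs hbdd
  obtain ⟨R, hKR⟩ := hK_cpt.isBounded.subset_closedBall 0
  have hR0 : 0 ≤ R := by
    have := hKR (interior_subset hK_int); simpa using this
  have hnormle : ∀ v : EuclideanSpace ℝ (Fin n), ‖v‖ ≤ (R + 1) * F v := by
    intro v
    have hKR' : K ⊆ ball (0 : EuclideanSpace ℝ (Fin n)) (R + 1) := hKR.trans (closedBall_subset_ball (by linarith))
    have h1 : gauge (ball (0 : EuclideanSpace ℝ (Fin n)) (R + 1)) v ≤ gauge K v :=
      gauge_mono habs hKR' v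
    rw [gauge_ball (by linarith)] at h1
    rw [← hF] at h1
    rw [div_le_iff₀ (by linarith)] at h1
    linarith [h1]
  -- integrability
  obtain ⟨C, hsC⟩ := hs_cpt.isBounded.subset_closedBall 0
  have hInt : ∀ (m : Measure (EuclideanSpace ℝ (Fin n))) [IsFiniteMeasure m], m sᶜ = 0 →
      ∀ y, Integrable (fun z => F (z - y)) m := by
    intro m _ hm y
    have hmeas : AEStronglyMeasurable (fun z => F (z - y)) m :=
      (hFcont.comp (continuous_id.sub continuous_const)).aestronglyMeasurable
    have h1 : ∀ᵐ z ∂m, z ∈ s := by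
      rw [ae_iff]
      exact hm
    have hae : ∀ᵐ z ∂m, ‖F (z - y)‖ ≤ (C + ‖y‖) / r := by
      filter_upwards [h1] with z hz
      rw [Real.norm_of_nonneg (hFnn _)]
      refine (hFle _).trans ?_
      have hz' : ‖z‖ ≤ C := by simpa [dist_eq_norm] using hsC hz
      have : ‖z - y‖ ≤ C + ‖y‖ := (norm_sub_le _ _).trans (by linarith)
      gcongr
    exact Integrable.mono' (integrable_const _) hmeas hae
  -- convexity of the integral functionals
  have hConvInt : ∀ (m : Measure (EuclideanSpace ℝ (Fin n))) [IsFiniteMeasure m], m sᶜ = 0 →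
      ConvexOn ℝ Set.univ (fun y => ∫ z, F (z - y) ∂m) := by
    intro m _ hm
    refine ⟨convex_univ, fun y _ y' _ a b ha hb hab => ?_⟩
    have key : ∀ z : EuclideanSpace ℝ (Fin n), F (z - (a • y + b • y')) ≤ a * F (z - y) + b * F (z - y') := by
      intro z
      have hz : z - (a • y + b • y') = a • (z - y) + b • (z - y') := by
        have hz2 : a • z + b • z = z := by rw [← add_smul, hab, one_smul]
        have h' : a • (z - y) + b • (z - y') = (a • z + b • z) - (a • y + b • y') := by
          rw [smul_sub, smul_sub]; abel
        rw [h', hz2]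
      rw [hz]; exact hFconvex a b _ _ ha hb
    have hIa := (hInt m hm y).const_mul a
    have hIb := (hInt m hm y').const_mul b
    calc (∫ z, F (z - (a • y + b • y')) ∂m)
        ≤ ∫ z, (a * F (z - y) + b * F (z - y')) ∂m :=
          integral_mono (hInt m hm _) (hIa.add hIb) key
      _ = a * ∫ z, F (z - y) ∂m + b * ∫ z, F (z - y') ∂m := by
          rw [integral_add hIa hIb, integral_const_mul, integral_const_mul]
      _ = a • (fun y => ∫ z, F (z - y) ∂m) y + b • (fun y => ∫ z, F (z - y) ∂m) y' := by
          simp [smul_eq_mul]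
  intro x
  -- decomposition of μ
  have hxsing : μ.restrict {x}ᶜ + μ {x} • Measure.dirac x = μ := by
    have h := μ.restrict_add_restrict_compl (s := {x}ᶜ) (measurableSet_singleton x).compl
    rwa [compl_compl, Measure.restrict_singleton] at h
  haveI hfin : IsFiniteMeasure (μ {x} • Measure.dirac x) := by
    constructor
    rw [Measure.smul_apply, smul_eq_mul]
    exact ENNReal.mul_lt_top (measure_lt_top μ _) (measure_lt_top _ _)
  have hν : μ - μ {x} • Measure.dirac x = μ.restrict {x}ᶜ := by
    have h2 : μ.restrict {x}ᶜ + μ {x} • Measure.dirac x - μ {x} • Measure.dirac x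
        = μ.restrict {x}ᶜ := Measure.add_sub_cancel
    rw [hxsing] at h2
    exact h2
  set ν : Measure (EuclideanSpace ℝ (Fin n)) := μ.restrict {x}ᶜ with hνdef
  have hν_s : ν sᶜ = 0 := by
    have h1 : ν sᶜ = μ (sᶜ ∩ {x}ᶜ) :=
      Measure.restrict_apply hs_cpt.isClosed.measurableSet.compl
    have h2 : μ (sᶜ ∩ {x}ᶜ) ≤ μ sᶜ := measure_mono inter_subset_left
    rw [h1]
    exact le_antisymm (h2.trans hs_null.le) zero_le
  have hν_x : ν {x} = 0 := by
    rw [hνdef, Measure.restrict_apply (measurableSet_singleton x)]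
    simp
  -- differentiation under the integral sign
  set F' : EuclideanSpace ℝ (Fin n) → (EuclideanSpace ℝ (Fin n) →L[ℝ] ℝ) := fun z => -(fderiv ℝ F (z - x)) with hF'def
  obtain ⟨hF'int, hG⟩ :
      Integrable F' ν ∧
        HasFDerivAt (fun y => ∫ z, F (z - y) ∂ν) (∫ z, F' z ∂ν) x := by
    apply hasFDerivAt_integral_of_dominated_loc_of_lip (bound := fun _ => r⁻¹)
      (s := ball x 1) (ball_mem_nhds x one_pos)
    · exact Eventually.of_forall fun y =>
        (hFcont.comp (continuous_id.sub continuous_const)).aestronglyMeasurable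
    · exact hInt ν hν_s x
    · exact (((measurable_fderiv ℝ F).comp (measurable_id.sub measurable_const)).neg
        ).aestronglyMeasurable
    · apply Eventually.of_forall
      intro z
      have l1 : LipschitzWith 1 (fun y : EuclideanSpace ℝ (Fin n) => z - y) := by
        apply LipschitzWith.of_dist_le_mul
        intro a b
        have : (z - a) - (z - b) = b - a := by abel
        rw [dist_eq_norm, this, ← dist_eq_norm, dist_comm]
        simp
      have l2 : LipschitzWith (Real.toNNReal r⁻¹ * 1) (fun y : EuclideanSpace ℝ (Fin n) => F (z - y)) :=
        hlip.comp l1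
      have l3 : LipschitzWith (Real.nnabs r⁻¹) (fun y : EuclideanSpace ℝ (Fin n) => F (z - y)) := by
        rwa [mul_one, ← Real.nnabs_of_nonneg (by positivity : (0:ℝ) ≤ r⁻¹)] at l2
      exact l3.lipschitzOnWith
    · exact integrable_const _
    · have hx_ae : ∀ᵐ z ∂ν, z ≠ x := by
        rw [ae_iff]
        convert hν_x using 2
        ext z; simp
      filter_upwards [hx_ae] with z hz
      have hz0 : z - x ≠ 0 := sub_ne_zero.mpr hz
      have hdF : DifferentiableAt ℝ F (z - x) := by
        have hmem : {(0 : EuclideanSpace ℝ (Fin n))}ᶜ ∈ 𝓝 (z - x) :=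
          isOpen_compl_singleton.mem_nhds (by simpa using hz0)
        exact (hFsmooth.contDiffAt hmem).differentiableAt one_ne_zero
      have hinner : HasFDerivAt (fun y : EuclideanSpace ℝ (Fin n) => z - y)
          (-(ContinuousLinearMap.id ℝ (EuclideanSpace ℝ (Fin n)))) x := (hasFDerivAt_id x).const_sub z
      have hcomp := hdF.hasFDerivAt.comp x hinner
      convert hcomp using 1
      ext v
      simp [hF'def]
      ext v
      simp [hF'def]
  set D : EuclideanSpace ℝ (Fin n) →L[ℝ] ℝ := ∫ z, F' z ∂ν with hDdef
  have hGdiff : DifferentiableAt ℝ (fun y => ∫ z, F (z - y) ∂ν) x := hG.differentiableAt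
  refine ⟨by rw [hν]; exact hGdiff, ?_⟩
  rw [hν, hG.fderiv]
  set c : ℝ := (μ {x}).toReal with hcdef
  have hc0 : 0 ≤ c := ENNReal.toReal_nonneg
  -- splitting of the μ-integral
  have hsplit : ∀ y, (∫ z, F (z - y) ∂μ) = (∫ z, F (z - y) ∂ν) + c * F (x - y) := by
    intro y
    have hdint : Integrable (fun z => F (z - y)) (Measure.dirac x) := by
      refine ⟨(hFcont.comp (continuous_id.sub continuous_const)).aestronglyMeasurable, ?_⟩
      rw [HasFiniteIntegral]
      rw [lintegral_dirac]
      exact ENNReal.coe_lt_top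
    have hsint : Integrable (fun z => F (z - y)) (μ {x} • Measure.dirac x) :=
      hdint.smul_measure (measure_ne_top μ _)
    conv_lhs => rw [← hxsing]
    rw [integral_add_measure (hInt ν hν_s y) hsint, integral_smul_measure, integral_dirac]
    simp [hcdef, smul_eq_mul]
  -- key quantitative characterization
  have hGsupport : ∀ y : EuclideanSpace ℝ (Fin n), (∫ z, F (z - x) ∂ν) + D (y - x) ≤ ∫ z, F (z - y) ∂ν := by
    intro y
    rcases eq_or_ne y x with rfl | hne
    · simp
    · set ψ : ℝ → ℝ := fun t => ∫ z, F (z - (x + t • (y - x))) ∂ν with hψdef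
      have hψconv : ConvexOn ℝ Set.univ ψ := by
        have h1 := (hConvInt ν hν_s).comp_affineMap (AffineMap.lineMap x y : ℝ →ᵃ[ℝ] EuclideanSpace ℝ (Fin n))
        have h2 : (AffineMap.lineMap x y : ℝ →ᵃ[ℝ] EuclideanSpace ℝ (Fin n)) ⁻¹' Set.univ = Set.univ := by simp
        rw [h2] at h1
        suffices hfun : ψ = (fun y => ∫ z, F (z - y) ∂ν) ∘ ⇑(AffineMap.lineMap x y : ℝ →ᵃ[ℝ] EuclideanSpace ℝ (Fin n)) by
          rw [hfun]; exact h1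
        funext t
        simp only [hψdef, Function.comp_apply, AffineMap.lineMap_apply]
        congr 1
        funext z
        congr 1
        rw [vsub_eq_sub, vadd_eq_add]
        abel_nf
      have hψd : HasDerivAt ψ (D (y - x)) 0 := by
        have h1 : HasDerivAt (fun t : ℝ => x + t • (y - x)) (y - x) 0 := by
          simpa using ((hasDerivAt_id (0 : ℝ)).smul_const (y - x)).const_add x
        have h0 : x + (0 : ℝ) • (y - x) = x := by simp
        have hG' : HasFDerivAt (fun y => ∫ z, F (z - y) ∂ν) D (x + (0 : ℝ) • (y - x)) := by
          rw [h0]; exact hG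
        have := hG'.comp_hasDerivAt (x := (0:ℝ)) h1
        exact this
      have hsl := hψconv.le_slope_of_hasDerivAt (mem_univ (0:ℝ)) (mem_univ (1:ℝ))
        zero_lt_one hψd
      rw [slope_def_field] at hsl
      have hψ1 : ψ 1 = ∫ z, F (z - y) ∂ν := by
        simp only [hψdef, one_smul]
        congr 1; funext z; congr 1
        abel
      have hψ0 : ψ 0 = ∫ z, F (z - x) ∂ν := by
        simp only [hψdef, zero_smul, add_zero]
      rw [hψ1, hψ0] at hsl
      have : D (y - x) ≤ (∫ z, F (z - y) ∂ν) - ∫ z, F (z - x) ∂ν := by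
        rw [sub_zero, div_one] at hsl
        exact hsl
      linarith
  constructor
  · -- local min → sSup ≤ c
    intro hmin'
    have hconvFμ : ConvexOn ℝ Set.univ (fun y => ∫ z, F (z - y) ∂μ) := hConvInt μ hs_null
    have hmin : ∀ y, (∫ z, F (z - x) ∂μ) ≤ ∫ z, F (z - y) ∂μ :=
      IsMinOn.of_isLocalMin_of_convex_univ hmin' hconvFμ
    have hkey : ∀ w : EuclideanSpace ℝ (Fin n), D w ≤ c * F w := by
      intro w
      have hψ : HasDerivAt (fun t : ℝ => ∫ z, F (z - (x - t • w)) ∂ν) (D (-w)) 0 := by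
        have h1 : HasDerivAt (fun t : ℝ => x - t • w) (-w) 0 := by
          simpa using ((hasDerivAt_id (0 : ℝ)).smul_const w).const_sub x
        have h0 : x - (0 : ℝ) • w = x := by simp
        have hG' : HasFDerivAt (fun y => ∫ z, F (z - y) ∂ν) D (x - (0 : ℝ) • w) := by
          rw [h0]; exact hG
        exact hG'.comp_hasDerivAt (x := (0:ℝ)) h1
      have ht := hasDerivAt_iff_tendsto_slope.mp hψ
      have ht' : Tendsto (slope (fun t : ℝ => ∫ z, F (z - (x - t • w)) ∂ν) 0)
          (𝓝[>] 0) (𝓝 (D (-w))) :=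
        ht.mono_left (nhdsWithin_mono 0 fun t ht => ne_of_gt ht)
      have hev : ∀ᶠ t in 𝓝[>] (0:ℝ),
          -(c * F w) ≤ slope (fun t : ℝ => ∫ z, F (z - (x - t • w)) ∂ν) 0 t := by
        filter_upwards [self_mem_nhdsWithin] with t (ht : 0 < t)
        have h1 := hmin (x - t • w)
        rw [hsplit (x - t • w), hsplit x] at h1
        have h3 : x - (x - t • w) = t • w := by abel
        rw [sub_self, h3, hF0, mul_zero, add_zero, hFsmul t ht.le] at h1
        simp only [slope_def_field, zero_smul, sub_zero]
        rw [le_div_iff₀ ht]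
        nlinarith
      have hlim : -(c * F w) ≤ D (-w) := ge_of_tendsto ht' hev
      have hDn : D (-w) = -(D w) := map_neg D w
      rw [hDn] at hlim
      linarith
    apply Real.sSup_le _ hc0
    rintro p ⟨v, hv, rfl⟩
    have hv1 : F v ≤ 1 := hv
    calc D v ≤ c * F v := hkey v
      _ ≤ c * 1 := by exact mul_le_mul_of_nonneg_left hv1 hc0
      _ = c := mul_one c
  · -- sSup ≤ c → local min
    intro hsup
    have hkey : ∀ w : EuclideanSpace ℝ (Fin n), D w ≤ c * F w := by
      intro w
      rcases eq_or_ne (F w) 0 with h0 | h0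
      · have hw : w = 0 := (hFzero w).mp h0
        simp [hw, hF0]
      · have hpos : 0 < F w := lt_of_le_of_ne (hFnn w) (Ne.symm h0)
        set v : EuclideanSpace ℝ (Fin n) := (F w)⁻¹ • w with hvdef
        have hv1 : F v = 1 := by
          rw [hvdef, hFsmul _ (inv_nonneg.mpr hpos.le)]
          field_simp
        have hmem : D v ∈ ⇑D '' {y | F y ≤ 1} := ⟨v, by simp [hv1], rfl⟩
        have hbd : BddAbove (⇑D '' {y | F y ≤ 1}) := by
          refine ⟨‖D‖ * (R + 1), ?_⟩
          rintro p ⟨u, hu, rfl⟩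
          have h1 : D u ≤ ‖D‖ * ‖u‖ :=
            (le_abs_self _).trans (D.le_opNorm u)
          have h2 : ‖u‖ ≤ (R + 1) * F u := hnormle u
          have h3 : F u ≤ 1 := hu
          have h4 : ‖u‖ ≤ R + 1 := h2.trans (by nlinarith)
          calc D u ≤ ‖D‖ * ‖u‖ := h1
            _ ≤ ‖D‖ * (R + 1) := by
                exact mul_le_mul_of_nonneg_left h4 (norm_nonneg D)
        have hDv : D v ≤ c := (le_csSup hbd hmem).trans hsup
        have hwv : D w = F w * D v := by
          have : (F w) • v = w := by rw [hvdef, smul_inv_smul₀ h0]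
          calc D w = D ((F w) • v) := by rw [this]
            _ = F w * D v := by rw [D.map_smul]; simp
        rw [hwv, mul_comm c (F w)]
        exact mul_le_mul_of_nonneg_left hDv hpos.le
    apply Filter.Eventually.of_forall
    intro y
    show (∫ z, F (z - x) ∂μ) ≤ ∫ z, F (z - y) ∂μ
    rw [hsplit y, hsplit x, sub_self, hF0, mul_zero, add_zero]
    have h1 := hGsupport y
    have h2 : D (x - y) ≤ c * F (x - y) := hkey _
    have h3 : D (y - x) + D (x - y) = 0 := by
      rw [← map_add]; simp
    linarith
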